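/- Let H be a real Hilbert space, A a continuous linear operator on H with ‖exp(tA)‖ ≤ M e^{−βt} for all t ≥ 0, where M ≥ 1 and β > 0. Let T > 0 and let y, λ, R₁, R₂ : [0,T] → H be continuous maps satisfying, for all t ∈ [0,T], y(t) = exp(tA) y(0) + ∫₀ᵗ exp((t−s)A) R₁(s) ds and λ(t) = exp((T−t)A*) λ(T) − ∫ₜᵀ exp((s−t)A*) R₂(s) ds, together with the bound ‖R₁(s)‖ + ‖R₂(s)‖ ≤ ρ (‖y(s)‖ + ‖λ(s)‖) for all s ∈ [0,T], where ρ ≥ 0 satisfies 16Mρ ≤ β. Then for all t ∈ [0,T], ‖y(t)‖ + ‖λ(t)‖ ≤ 2M (‖y(0)‖ + ‖λ(T)‖)(e^{−βt/2} + e^{−β(T−t)/2}). -/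

import Mathlib

open MeasureTheory ContinuousLinearMap

set_option maxHeartbeats 1000000
set_option synthInstance.maxHeartbeats 400000

private lemma my_integral_exp_mul (c : ℝ) (hc : c ≠ 0) (a b : ℝ) :
    ∫ s in a..b, Real.exp (c * s) = (Real.exp (c * b) - Real.exp (c * a)) / c := by
  have h : ∀ s : ℝ, HasDerivAt (fun u => Real.exp (c * u) / c) (Real.exp (c * s)) s := by
    intro s
    have h1 : HasDerivAt (fun u : ℝ => c * u) c s := by
      simpa using (hasDerivAt_id s).const_mul c
    have h2 := (Real.hasDerivAt_exp (c * s)).comp s h1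
    have h3 := h2.div_const c
    simpa [mul_div_cancel_right₀ _ hc] using h3
  rw [intervalIntegral.integral_eq_sub_of_hasDerivAt (fun s _ => h s)
    ((Real.continuous_exp.comp (continuous_const.mul continuous_id)).intervalIntegrable a b)]
  ring

private lemma my_int_exp_le_pos (c K a b : ℝ) (hc : 0 < c) (hK : 0 ≤ K) (_hab : a ≤ b) :
    ∫ s in a..b, K * Real.exp (c * s) ≤ K / c * Real.exp (c * b) := by
  rw [intervalIntegral.integral_const_mul, my_integral_exp_mul c hc.ne' a b]
  have h1 := Real.exp_pos (c * a)
  have h2 := Real.exp_pos (c * b)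
  rw [div_mul_eq_mul_div, ← mul_div_assoc]
  gcongr
  nlinarith

private lemma my_int_exp_le_neg (c K a b : ℝ) (hc : c < 0) (hK : 0 ≤ K) (_hab : a ≤ b) :
    ∫ s in a..b, K * Real.exp (c * s) ≤ K / (-c) * Real.exp (c * a) := by
  rw [intervalIntegral.integral_const_mul, my_integral_exp_mul c hc.ne a b]
  have h1 := Real.exp_pos (c * a)
  have h2 := Real.exp_pos (c * b)
  have hc' : 0 < -c := by linarith
  calc K * ((Real.exp (c * b) - Real.exp (c * a)) / c)
      = K * (Real.exp (c * a) - Real.exp (c * b)) * (-c)⁻¹ := by rw [inv_neg]; ring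
    _ ≤ K * Real.exp (c * a) * (-c)⁻¹ :=
        mul_le_mul_of_nonneg_right (by nlinarith) (by positivity)
    _ = K / (-c) * Real.exp (c * a) := by ring

private lemma my_kern1 (β T t : ℝ) (hβ : 0 < β) (ht0 : 0 ≤ t) (_htT : t ≤ T) :
    ∫ s in (0:ℝ)..t, Real.exp (-β*(t-s)) * (Real.exp (-β*s/2) + Real.exp (-β*(T-s)/2))
      ≤ 2/β * Real.exp (-β*t/2) + 2/(3*β) * Real.exp (-β*(T-t)/2) := by
  have hint : ∀ (c K : ℝ), IntervalIntegrable (fun s => K * Real.exp (c*s)) volume 0 t :=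
    fun c K => (continuous_const.mul (Real.continuous_exp.comp
      (continuous_const.mul continuous_id))).intervalIntegrable 0 t
  have hre : ∀ s : ℝ, Real.exp (-β*(t-s)) * (Real.exp (-β*s/2) + Real.exp (-β*(T-s)/2))
      = Real.exp (-β*t) * Real.exp ((β/2)*s) + Real.exp (-β*t-β*T/2) * Real.exp ((3*β/2)*s) := by
    intro s
    rw [mul_add, ← Real.exp_add, ← Real.exp_add, ← Real.exp_add, ← Real.exp_add]
    congr 1 <;> exact congrArg Real.exp (by ring)
  simp only [hre]
  rw [intervalIntegral.integral_add (hint _ _) (hint _ _)]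
  have t1 := my_int_exp_le_pos (β/2) (Real.exp (-β*t)) 0 t (by positivity) (Real.exp_pos _).le ht0
  have t2 := my_int_exp_le_pos (3*β/2) (Real.exp (-β*t-β*T/2)) 0 t (by positivity) (Real.exp_pos _).le ht0
  have e1 : Real.exp (-β*t) / (β/2) * Real.exp ((β/2)*t) = 2/β * Real.exp (-β*t/2) := by
    have h3 : Real.exp (-β*t) * Real.exp ((β/2)*t) = Real.exp (-β*t/2) := by
      rw [← Real.exp_add]; exact congrArg Real.exp (by ring)
    rw [div_mul_eq_mul_div, h3]
    field_simp
  have e2 : Real.exp (-β*t-β*T/2) / (3*β/2) * Real.exp ((3*β/2)*t) = 2/(3*β) * Real.exp (-β*(T-t)/2) := by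
    have h3 : Real.exp (-β*t-β*T/2) * Real.exp ((3*β/2)*t) = Real.exp (-β*(T-t)/2) := by
      rw [← Real.exp_add]; exact congrArg Real.exp (by ring)
    rw [div_mul_eq_mul_div, h3]
    field_simp
  rw [e1] at t1; rw [e2] at t2
  linarith

private lemma my_kern2 (β T t : ℝ) (hβ : 0 < β) (_ht0 : 0 ≤ t) (htT : t ≤ T) :
    ∫ s in t..T, Real.exp (-β*(s-t)) * (Real.exp (-β*s/2) + Real.exp (-β*(T-s)/2))
      ≤ 2/(3*β) * Real.exp (-β*t/2) + 2/β * Real.exp (-β*(T-t)/2) := by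
  have hint : ∀ (c K : ℝ), IntervalIntegrable (fun s => K * Real.exp (c*s)) volume t T :=
    fun c K => (continuous_const.mul (Real.continuous_exp.comp
      (continuous_const.mul continuous_id))).intervalIntegrable t T
  have hre : ∀ s : ℝ, Real.exp (-β*(s-t)) * (Real.exp (-β*s/2) + Real.exp (-β*(T-s)/2))
      = Real.exp (β*t) * Real.exp ((-(3*β/2))*s) + Real.exp (β*t-β*T/2) * Real.exp ((-(β/2))*s) := by
    intro s
    rw [mul_add, ← Real.exp_add, ← Real.exp_add, ← Real.exp_add, ← Real.exp_add]
    congr 1 <;> exact congrArg Real.exp (by ring)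
  simp only [hre]
  rw [intervalIntegral.integral_add (hint _ _) (hint _ _)]
  have t1 := my_int_exp_le_neg (-(3*β/2)) (Real.exp (β*t)) t T (by linarith) (Real.exp_pos _).le htT
  have t2 := my_int_exp_le_neg (-(β/2)) (Real.exp (β*t-β*T/2)) t T (by linarith) (Real.exp_pos _).le htT
  rw [neg_neg] at t1 t2
  have e1 : Real.exp (β*t) / (3*β/2) * Real.exp ((-(3*β/2))*t) = 2/(3*β) * Real.exp (-β*t/2) := by
    have h3 : Real.exp (β*t) * Real.exp ((-(3*β/2))*t) = Real.exp (-β*t/2) := by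
      rw [← Real.exp_add]; exact congrArg Real.exp (by ring)
    rw [div_mul_eq_mul_div, h3]
    field_simp
  have e2 : Real.exp (β*t-β*T/2) / (β/2) * Real.exp ((-(β/2))*t) = 2/β * Real.exp (-β*(T-t)/2) := by
    have h3 : Real.exp (β*t-β*T/2) * Real.exp ((-(β/2))*t) = Real.exp (-β*(T-t)/2) := by
      rw [← Real.exp_add]; exact congrArg Real.exp (by ring)
    rw [div_mul_eq_mul_div, h3]
    field_simp
  rw [e1] at t1; rw [e2] at t2
  linarith


/-- Exponential turnpike estimate for a decoupled forward–backward mild system with an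
exponentially stable generator and small coupled remainders: the forward variable `y`
and backward variable `λ` satisfy
`‖y(t)‖ + ‖λ(t)‖ ≤ 2M (‖y(0)‖ + ‖λ(T)‖)(e^{−βt/2} + e^{−β(T−t)/2})`. -/
theorem turnpike_forward_backward_mild_system
    {H : Type*} [NormedAddCommGroup H] [InnerProductSpace ℝ H] [CompleteSpace H]
    (A : H →L[ℝ] H) (M β : ℝ) (hM : 1 ≤ M) (hβ : 0 < β)
    (hdecay : ∀ t : ℝ, 0 ≤ t → ‖NormedSpace.exp (t • A)‖ ≤ M * Real.exp (-β * t))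
    (T : ℝ) (hT : 0 < T) (y lam R₁ R₂ : ℝ → H)
    (hy : ContinuousOn y (Set.Icc 0 T)) (hlam : ContinuousOn lam (Set.Icc 0 T))
    (hR₁ : ContinuousOn R₁ (Set.Icc 0 T)) (hR₂ : ContinuousOn R₂ (Set.Icc 0 T))
    (hmildy : ∀ t ∈ Set.Icc (0 : ℝ) T,
      y t = NormedSpace.exp (t • A) (y 0)
        + ∫ s in (0 : ℝ)..t, NormedSpace.exp ((t - s) • A) (R₁ s))
    (hmildlam : ∀ t ∈ Set.Icc (0 : ℝ) T,
      lam t = NormedSpace.exp ((T - t) • adjoint A) (lam T)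
        - ∫ s in t..T, NormedSpace.exp ((s - t) • adjoint A) (R₂ s))
    (ρ : ℝ) (hρ : 0 ≤ ρ) (hsmall : 16 * M * ρ ≤ β)
    (hRbound : ∀ s ∈ Set.Icc (0 : ℝ) T,
      ‖R₁ s‖ + ‖R₂ s‖ ≤ ρ * (‖y s‖ + ‖lam s‖)) :
    ∀ t ∈ Set.Icc (0 : ℝ) T,
      ‖y t‖ + ‖lam t‖
        ≤ 2 * M * (‖y 0‖ + ‖lam T‖)
            * (Real.exp (-β * t / 2) + Real.exp (-β * (T - t) / 2)) := by
  have hM0 : (0:ℝ) < M := lt_of_lt_of_le one_pos hM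
  set c : ℝ := ‖y 0‖ + ‖lam T‖ with hcdef
  have hc0 : 0 ≤ c := by positivity
  -- adjoint decay
  have hdecay' : ∀ s : ℝ, 0 ≤ s →
      ‖NormedSpace.exp (s • adjoint A)‖ ≤ M * Real.exp (-β * s) := by
    intro s hs
    have hst : NormedSpace.exp (s • adjoint A) = adjoint (NormedSpace.exp (s • A)) := by
      rw [← ContinuousLinearMap.star_eq_adjoint (NormedSpace.exp (s • A)),
        NormedSpace.star_exp, star_smul, star_trivial,
        ContinuousLinearMap.star_eq_adjoint]
    rw [hst, LinearIsometryEquiv.norm_map adjoint]; exact hdecay s hs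
  have hhpos : ∀ t : ℝ, 0 < Real.exp (-β*t/2) + Real.exp (-β*(T-t)/2) := fun t => by positivity
  -- maximum of the quotient
  have hφcont : ContinuousOn (fun t => ‖y t‖ + ‖lam t‖) (Set.Icc 0 T) := hy.norm.add hlam.norm
  have hhcont : Continuous (fun t : ℝ => Real.exp (-β*t/2) + Real.exp (-β*(T-t)/2)) := by
    fun_prop
  have hcont : ContinuousOn
      (fun t => (‖y t‖ + ‖lam t‖) / (Real.exp (-β*t/2) + Real.exp (-β*(T-t)/2)))
      (Set.Icc 0 T) :=
    hφcont.div hhcont.continuousOn (fun t _ => (hhpos t).ne')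
  obtain ⟨t₀, ht₀, hmax⟩ := (isCompact_Icc).exists_isMaxOn (Set.nonempty_Icc.mpr hT.le) hcont
  set K : ℝ := (‖y t₀‖ + ‖lam t₀‖) / (Real.exp (-β*t₀/2) + Real.exp (-β*(T-t₀)/2)) with hKdef
  have hK0 : 0 ≤ K := div_nonneg (by positivity) (hhpos t₀).le
  have hKb : ∀ t ∈ Set.Icc (0:ℝ) T,
      ‖y t‖ + ‖lam t‖ ≤ K * (Real.exp (-β*t/2) + Real.exp (-β*(T-t)/2)) := by
    intro t ht
    have h1 := hmax ht
    have h2 := (div_le_iff₀ (hhpos t)).mp h1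
    linarith [h2]
  -- pointwise bounds on the remainders
  have hRb : ∀ s ∈ Set.Icc (0:ℝ) T,
      ‖R₁ s‖ ≤ ρ * (K * (Real.exp (-β*s/2) + Real.exp (-β*(T-s)/2)))
      ∧ ‖R₂ s‖ ≤ ρ * (K * (Real.exp (-β*s/2) + Real.exp (-β*(T-s)/2))) := by
    intro s hs
    have h1 := hRbound s hs
    have h2 := hKb s hs
    have h3 : ρ * (‖y s‖ + ‖lam s‖)
        ≤ ρ * (K * (Real.exp (-β*s/2) + Real.exp (-β*(T-s)/2))) :=
      mul_le_mul_of_nonneg_left h2 hρ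
    exact ⟨by nlinarith [norm_nonneg (R₂ s)], by nlinarith [norm_nonneg (R₁ s)]⟩
  -- the core estimate
  have key : ∀ t ∈ Set.Icc (0:ℝ) T,
      ‖y t‖ + ‖lam t‖ ≤ (M * c + K/6) * (Real.exp (-β*t/2) + Real.exp (-β*(T-t)/2)) := by
    intro t ht
    obtain ⟨ht0, htT⟩ := ht
    have hMρK : (0:ℝ) ≤ M*ρ*K := by positivity
    -- forward estimate
    have hy1 : ‖y t‖ ≤ M * Real.exp (-β*t) * ‖y 0‖
        + (M*ρ*K) * (∫ s in (0:ℝ)..t,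
            Real.exp (-β*(t-s)) * (Real.exp (-β*s/2) + Real.exp (-β*(T-s)/2))) := by
      rw [hmildy t ⟨ht0, htT⟩]
      refine (norm_add_le _ _).trans (add_le_add ?_ ?_)
      · refine ((NormedSpace.exp (t•A)).le_opNorm (y 0)).trans ?_
        exact mul_le_mul_of_nonneg_right (hdecay t ht0) (norm_nonneg _)
      · have hcint : ContinuousOn (fun s => NormedSpace.exp ((t-s)•A) (R₁ s)) (Set.Icc 0 t) :=
          ContinuousOn.clm_apply
            (((continuous_iff_continuousAt.2 fun x => (NormedSpace.exp_analytic (𝕂 := ℝ) x).continuousAt).comp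
              ((continuous_const.sub continuous_id).smul continuous_const)).continuousOn)
            (hR₁.mono (Set.Icc_subset_Icc le_rfl htT))
        have hInt1 : IntervalIntegrable
            (fun s => NormedSpace.exp ((t-s)•A) (R₁ s)) volume 0 t :=
          hcint.intervalIntegrable_of_Icc ht0
        have hRHScont : Continuous (fun s : ℝ => (M*ρ*K) *
            (Real.exp (-β*(t-s)) * (Real.exp (-β*s/2) + Real.exp (-β*(T-s)/2)))) := by
          fun_prop
        refine (intervalIntegral.norm_integral_le_integral_norm ht0).trans ?_
        rw [← intervalIntegral.integral_const_mul]
        refine intervalIntegral.integral_mono_on ht0 hInt1.norm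
          (hRHScont.intervalIntegrable 0 t) ?_
        intro s hs
        obtain ⟨hs0, hst⟩ := hs
        have hsT : s ∈ Set.Icc (0:ℝ) T := ⟨hs0, hst.trans htT⟩
        have hts : (0:ℝ) ≤ t - s := by linarith
        have b1 : ‖NormedSpace.exp ((t-s)•A) (R₁ s)‖
            ≤ (M * Real.exp (-β*(t-s))) * ‖R₁ s‖ :=
          ((NormedSpace.exp ((t-s)•A)).le_opNorm (R₁ s)).trans
            (mul_le_mul_of_nonneg_right (hdecay _ hts) (norm_nonneg _))
        have b2 := (hRb s hsT).1
        have hM1 : (0:ℝ) ≤ M * Real.exp (-β*(t-s)) := by positivity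
        calc ‖NormedSpace.exp ((t-s)•A) (R₁ s)‖
            ≤ (M * Real.exp (-β*(t-s))) * ‖R₁ s‖ := b1
          _ ≤ (M * Real.exp (-β*(t-s)))
              * (ρ * (K * (Real.exp (-β*s/2) + Real.exp (-β*(T-s)/2)))) :=
              mul_le_mul_of_nonneg_left b2 hM1
          _ = (M*ρ*K) * (Real.exp (-β*(t-s))
              * (Real.exp (-β*s/2) + Real.exp (-β*(T-s)/2))) := by ring
    -- backward estimate
    have hl1 : ‖lam t‖ ≤ M * Real.exp (-β*(T-t)) * ‖lam T‖
        + (M*ρ*K) * (∫ s in t..T,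
            Real.exp (-β*(s-t)) * (Real.exp (-β*s/2) + Real.exp (-β*(T-s)/2))) := by
      rw [hmildlam t ⟨ht0, htT⟩]
      refine (norm_sub_le _ _).trans (add_le_add ?_ ?_)
      · refine ((NormedSpace.exp ((T-t)•adjoint A)).le_opNorm (lam T)).trans ?_
        exact mul_le_mul_of_nonneg_right (hdecay' (T-t) (by linarith)) (norm_nonneg _)
      · have hcint : ContinuousOn
            (fun s => NormedSpace.exp ((s-t)•adjoint A) (R₂ s)) (Set.Icc t T) :=
          ContinuousOn.clm_apply
            (((continuous_iff_continuousAt.2 fun x => (NormedSpace.exp_analytic (𝕂 := ℝ) x).continuousAt).comp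
              ((continuous_id.sub continuous_const).smul continuous_const)).continuousOn)
            (hR₂.mono (Set.Icc_subset_Icc ht0 le_rfl))
        have hInt1 : IntervalIntegrable
            (fun s => NormedSpace.exp ((s-t)•adjoint A) (R₂ s)) volume t T :=
          hcint.intervalIntegrable_of_Icc htT
        have hRHScont : Continuous (fun s : ℝ => (M*ρ*K) *
            (Real.exp (-β*(s-t)) * (Real.exp (-β*s/2) + Real.exp (-β*(T-s)/2)))) := by
          fun_prop
        refine (intervalIntegral.norm_integral_le_integral_norm htT).trans ?_
        rw [← intervalIntegral.integral_const_mul]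
        refine intervalIntegral.integral_mono_on htT hInt1.norm
          (hRHScont.intervalIntegrable t T) ?_
        intro s hs
        obtain ⟨hts', hsT'⟩ := hs
        have hsT : s ∈ Set.Icc (0:ℝ) T := ⟨ht0.trans hts', hsT'⟩
        have hst : (0:ℝ) ≤ s - t := by linarith
        have b1 : ‖NormedSpace.exp ((s-t)•adjoint A) (R₂ s)‖
            ≤ (M * Real.exp (-β*(s-t))) * ‖R₂ s‖ :=
          ((NormedSpace.exp ((s-t)•adjoint A)).le_opNorm (R₂ s)).trans
            (mul_le_mul_of_nonneg_right (hdecay' _ hst) (norm_nonneg _))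
        have b2 := (hRb s hsT).2
        have hM1 : (0:ℝ) ≤ M * Real.exp (-β*(s-t)) := by positivity
        calc ‖NormedSpace.exp ((s-t)•adjoint A) (R₂ s)‖
            ≤ (M * Real.exp (-β*(s-t))) * ‖R₂ s‖ := b1
          _ ≤ (M * Real.exp (-β*(s-t)))
              * (ρ * (K * (Real.exp (-β*s/2) + Real.exp (-β*(T-s)/2)))) :=
              mul_le_mul_of_nonneg_left b2 hM1
          _ = (M*ρ*K) * (Real.exp (-β*(s-t))
              * (Real.exp (-β*s/2) + Real.exp (-β*(T-s)/2))) := by ring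
    -- kernel bounds
    have k1 := my_kern1 β T t hβ ht0 htT
    have k2 := my_kern2 β T t hβ ht0 htT
    have hy2 : ‖y t‖ ≤ M * Real.exp (-β*t) * ‖y 0‖
        + (M*ρ*K) * (2/β * Real.exp (-β*t/2) + 2/(3*β) * Real.exp (-β*(T-t)/2)) :=
      hy1.trans (add_le_add_right (mul_le_mul_of_nonneg_left k1 hMρK) _)
    have hl2 : ‖lam t‖ ≤ M * Real.exp (-β*(T-t)) * ‖lam T‖
        + (M*ρ*K) * (2/(3*β) * Real.exp (-β*t/2) + 2/β * Real.exp (-β*(T-t)/2)) :=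
      hl1.trans (add_le_add_right (mul_le_mul_of_nonneg_left k2 hMρK) _)
    -- exponent comparisons
    have hE1 : Real.exp (-β*t) ≤ Real.exp (-β*t/2) := by
      apply Real.exp_le_exp.mpr; nlinarith
    have hE2 : Real.exp (-β*(T-t)) ≤ Real.exp (-β*(T-t)/2) := by
      apply Real.exp_le_exp.mpr; nlinarith
    have hy0c : ‖y 0‖ ≤ c := by rw [hcdef]; nlinarith [norm_nonneg (lam T)]
    have hlTc : ‖lam T‖ ≤ c := by rw [hcdef]; nlinarith [norm_nonneg (y 0)]
    have hA1 : M * Real.exp (-β*t) * ‖y 0‖ ≤ M * c * Real.exp (-β*t/2) := by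
      have h4 : Real.exp (-β*t) * ‖y 0‖ ≤ Real.exp (-β*t/2) * c :=
        mul_le_mul hE1 hy0c (norm_nonneg _) (Real.exp_pos _).le
      calc M * Real.exp (-β*t) * ‖y 0‖ = M * (Real.exp (-β*t) * ‖y 0‖) := by ring
        _ ≤ M * (Real.exp (-β*t/2) * c) := mul_le_mul_of_nonneg_left h4 hM0.le
        _ = M * c * Real.exp (-β*t/2) := by ring
    have hA2 : M * Real.exp (-β*(T-t)) * ‖lam T‖ ≤ M * c * Real.exp (-β*(T-t)/2) := by
      have h4 : Real.exp (-β*(T-t)) * ‖lam T‖ ≤ Real.exp (-β*(T-t)/2) * c :=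
        mul_le_mul hE2 hlTc (norm_nonneg _) (Real.exp_pos _).le
      calc M * Real.exp (-β*(T-t)) * ‖lam T‖ = M * (Real.exp (-β*(T-t)) * ‖lam T‖) := by ring
        _ ≤ M * (Real.exp (-β*(T-t)/2) * c) := mul_le_mul_of_nonneg_left h4 hM0.le
        _ = M * c * Real.exp (-β*(T-t)/2) := by ring
    -- smallness
    have hsm : (M*ρ*K) * (2/β * Real.exp (-β*t/2) + 2/(3*β) * Real.exp (-β*(T-t)/2))
        + (M*ρ*K) * (2/(3*β) * Real.exp (-β*t/2) + 2/β * Real.exp (-β*(T-t)/2))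
        ≤ K/6 * (Real.exp (-β*t/2) + Real.exp (-β*(T-t)/2)) := by
      have heq : (M*ρ*K) * (2/β * Real.exp (-β*t/2) + 2/(3*β) * Real.exp (-β*(T-t)/2))
          + (M*ρ*K) * (2/(3*β) * Real.exp (-β*t/2) + 2/β * Real.exp (-β*(T-t)/2))
          = (M*ρ*K * (8/(3*β))) * (Real.exp (-β*t/2) + Real.exp (-β*(T-t)/2)) := by
        field_simp
        ring
      rw [heq]
      refine mul_le_mul_of_nonneg_right ?_ (hhpos t).le
      have hs1 : 16*M*ρ*K ≤ β*K := by nlinarith [mul_le_mul_of_nonneg_right hsmall hK0]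
      rw [show M*ρ*K*(8/(3*β)) = 8*(M*ρ*K)/(3*β) by ring,
        div_le_div_iff₀ (by positivity) (by norm_num : (0:ℝ) < 6)]
      nlinarith
    linarith
  -- conclude
  have hKle : K ≤ 2 * M * c := by
    have h1 := key t₀ ht₀
    have h2 : ‖y t₀‖ + ‖lam t₀‖ = K * (Real.exp (-β*t₀/2) + Real.exp (-β*(T-t₀)/2)) := by
      rw [hKdef]; field_simp
    rw [h2] at h1
    have h3 := le_of_mul_le_mul_right (by linarith [h1] :
      K * (Real.exp (-β*t₀/2) + Real.exp (-β*(T-t₀)/2))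
        ≤ (M*c + K/6) * (Real.exp (-β*t₀/2) + Real.exp (-β*(T-t₀)/2))) (hhpos t₀)
    have hMc : 0 ≤ M * c := by positivity
    nlinarith [h3, hMc]
  intro t ht
  have h1 := hKb t ht
  have h2 : K * (Real.exp (-β*t/2) + Real.exp (-β*(T-t)/2))
      ≤ 2*M*c * (Real.exp (-β*t/2) + Real.exp (-β*(T-t)/2)) :=
    mul_le_mul_of_nonneg_right hKle (hhpos t).le
  calc ‖y t‖ + ‖lam t‖ ≤ K * (Real.exp (-β*t/2) + Real.exp (-β*(T-t)/2)) := h1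
    _ ≤ 2*M*c * (Real.exp (-β*t/2) + Real.exp (-β*(T-t)/2)) := h2
    _ = 2 * M * (‖y 0‖ + ‖lam T‖) * (Real.exp (-β * t / 2) + Real.exp (-β * (T - t) / 2)) := by
        rw [hcdef]
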